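/- Fix real numbers α > 2, ρ_p > 0, c > 0, h > 0, and r_T ≥ 0. For each N > 0 let n = c·N, R_N = √(n/(π ρ_p)), and let X₁, X₂ be i.i.d. random points uniformly distributed on the closed disk of radius R_N centered at the origin in ℝ². Let 𝒜_N be the event that X₁ and X₂ both lie in the annulus {x ∈ ℝ² : r_T + 2h ≤ |x| ≤ R_N − h} and |X₁ − X₂| > 2h. Then for every real x > (π ρ_p/c)^{α/2}, lim_{N→∞} Pr( N^{α/2}|X₁|^{-α} > x and N^{α/2}|X₂|^{-α} > x | 𝒜_N ) = (π ρ_p/c)² · x^{-4/α}. -/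

import Mathlib

open MeasureTheory ProbabilityTheory Set Real Filter


local notation "E2" => EuclideanSpace ℝ (Fin 2)

lemma volE2_ball (R : ℝ) (hR : 0 ≤ R) :
    volume (Metric.ball (0 : E2) R) = ENNReal.ofReal (π * R ^ 2) := by
  rw [EuclideanSpace.volume_ball]
  have h2 : (Fintype.card (Fin 2)) = 2 := by simp
  rw [h2]
  have : Real.Gamma ((2 : ℕ) / 2 + 1) = 1 := by
    norm_num [Real.Gamma_two]
  rw [this]
  rw [Real.sq_sqrt Real.pi_pos.le]
  rw [← ENNReal.ofReal_pow hR, ← ENNReal.ofReal_mul (by positivity)]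
  ring_nf

lemma volE2_closedBall (z : E2) (R : ℝ) (hR : 0 ≤ R) :
    volume (Metric.closedBall z R) = ENNReal.ofReal (π * R ^ 2) := by
  rw [Measure.addHaar_closedBall_eq_addHaar_ball,
    Measure.addHaar_ball_center, ← volE2_ball R hR]

/-- The uniform probability measure on the closed disk of radius `R` centered at the
origin of the plane. -/
noncomputable def unifDisk (R : ℝ) : Measure (EuclideanSpace ℝ (Fin 2)) :=
  (volume (Metric.closedBall (0 : EuclideanSpace ℝ (Fin 2)) R))⁻¹ •
    volume.restrict (Metric.closedBall (0 : EuclideanSpace ℝ (Fin 2)) R)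


lemma unifDisk_apply (R : ℝ) (hR : 0 ≤ R) {s : Set E2} (hs : MeasurableSet s) :
    unifDisk R s = (ENNReal.ofReal (π * R ^ 2))⁻¹ * volume (s ∩ Metric.closedBall 0 R) := by
  rw [unifDisk, Measure.smul_apply, Measure.restrict_apply hs, smul_eq_mul,
    volE2_closedBall _ _ hR]

lemma unifDisk_prob (R : ℝ) (hR : 0 < R) : IsProbabilityMeasure (unifDisk R) := by
  constructor
  rw [unifDisk_apply R hR.le MeasurableSet.univ, Set.univ_inter, volE2_closedBall _ _ hR.le]
  rw [ENNReal.inv_mul_cancel (by positivity) ENNReal.ofReal_ne_top]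

lemma ofReal_inv_mul (A B : ℝ) (hA : 0 < A) (hB : 0 ≤ B) :
    (ENNReal.ofReal A)⁻¹ * ENNReal.ofReal B = ENNReal.ofReal (B / A) := by
  rw [← ENNReal.ofReal_inv_of_pos hA, ← ENNReal.ofReal_mul (by positivity)]
  rw [inv_mul_eq_div]

lemma unifDisk_ball_diff (R r : ℝ) (hr : 0 ≤ r) (hR : 0 < R) (hrR : r ≤ R) :
    unifDisk R (Metric.ball 0 r \ {0}) = ENNReal.ofReal (π * r ^ 2 / (π * R ^ 2)) := by
  rw [unifDisk_apply R hR.le (measurableSet_ball.diff (measurableSet_singleton 0))]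
  have hsub : (Metric.ball (0:E2) r \ {0}) ∩ Metric.closedBall 0 R
      = Metric.ball (0:E2) r \ {0} := by
    apply Set.inter_eq_left.mpr
    exact Set.diff_subset.trans ((Metric.ball_subset_ball hrR).trans Metric.ball_subset_closedBall)
  rw [hsub, measure_diff_null (measure_singleton 0), volE2_ball _ hr,
    ofReal_inv_mul _ _ (by positivity) (by positivity)]

lemma unifDisk_annulus_compl (R a h' : ℝ) (hR : 0 < R) (ha : 0 ≤ a) (hh : 0 ≤ h')
    (hRh : 0 ≤ R - h') :
    unifDisk R {v : E2 | a ≤ ‖v‖ ∧ ‖v‖ ≤ R - h'}ᶜ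
      ≤ ENNReal.ofReal ((a ^ 2 + 2 * R * h') / R ^ 2) := by
  have hmeas : MeasurableSet {v : E2 | a ≤ ‖v‖ ∧ ‖v‖ ≤ R - h'} :=
    (measurableSet_le measurable_const measurable_norm).inter
      (measurableSet_le measurable_norm measurable_const)
  rw [unifDisk_apply R hR.le hmeas.compl]
  have hsub : {v : E2 | a ≤ ‖v‖ ∧ ‖v‖ ≤ R - h'}ᶜ ∩ Metric.closedBall 0 R
      ⊆ Metric.ball 0 a ∪ (Metric.closedBall 0 R \ Metric.ball 0 (R - h')) := by
    rintro v ⟨hv, hvR⟩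
    simp only [Set.mem_compl_iff, Set.mem_setOf_eq, not_and, not_le] at hv
    rcases lt_or_ge ‖v‖ a with h1 | h1
    · exact Or.inl (Metric.mem_ball.mpr (by rwa [dist_zero_right]))
    · refine Or.inr ⟨hvR, fun hmem => ?_⟩
      rw [Metric.mem_ball, dist_zero_right] at hmem
      have := hv h1
      linarith
  have hdiff : volume (Metric.closedBall (0:E2) R \ Metric.ball 0 (R - h'))
      = ENNReal.ofReal (π * R ^ 2) - ENNReal.ofReal (π * (R - h') ^ 2) := by
    rw [measure_diff ((Metric.ball_subset_ball (by linarith)).trans Metric.ball_subset_closedBall)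
      measurableSet_ball.nullMeasurableSet (by simp [volE2_ball _ hRh]),
      volE2_closedBall _ _ hR.le, volE2_ball _ hRh]
  have hvol : volume ({v : E2 | a ≤ ‖v‖ ∧ ‖v‖ ≤ R - h'}ᶜ ∩ Metric.closedBall 0 R)
      ≤ ENNReal.ofReal (π * a ^ 2 + 2 * π * R * h') := by
    refine (measure_mono hsub).trans ((measure_union_le _ _).trans ?_)
    rw [volE2_ball _ ha, hdiff, ← ENNReal.ofReal_sub _ (by positivity)]
    rw [← ENNReal.ofReal_add (by positivity) (by nlinarith [Real.pi_pos, mul_nonneg hh (show (0:ℝ) ≤ 2*R - h' by linarith)])]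
    apply ENNReal.ofReal_le_ofReal
    nlinarith [Real.pi_pos, mul_nonneg Real.pi_pos.le (sq_nonneg h')]
  calc (ENNReal.ofReal (π * R ^ 2))⁻¹ *
        volume ({v : E2 | a ≤ ‖v‖ ∧ ‖v‖ ≤ R - h'}ᶜ ∩ Metric.closedBall 0 R)
      ≤ (ENNReal.ofReal (π * R ^ 2))⁻¹ * ENNReal.ofReal (π * a ^ 2 + 2 * π * R * h') :=
        mul_le_mul_right hvol _
    _ = ENNReal.ofReal ((π * a ^ 2 + 2 * π * R * h') / (π * R ^ 2)) :=
        ofReal_inv_mul _ _ (by positivity) (by positivity)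
    _ = ENNReal.ofReal ((a ^ 2 + 2 * R * h') / R ^ 2) := by
        congr 1
        rw [div_eq_div_iff (by positivity) (by positivity)]
        ring

lemma prod_dist_le (R h' : ℝ) (hR : 0 < R) (hh : 0 ≤ h') :
    ((unifDisk R).prod (unifDisk R)) {p : E2 × E2 | dist p.1 p.2 ≤ h'}
      ≤ ENNReal.ofReal (h' ^ 2 / R ^ 2) := by
  haveI := unifDisk_prob R hR
  have hD : MeasurableSet {p : E2 × E2 | dist p.1 p.2 ≤ h'} :=
    measurableSet_le (measurable_fst.dist measurable_snd) measurable_const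
  rw [Measure.prod_apply hD]
  have hslice : ∀ v : E2, unifDisk R (Prod.mk v ⁻¹' {p : E2 × E2 | dist p.1 p.2 ≤ h'})
      ≤ ENNReal.ofReal (h' ^ 2 / R ^ 2) := by
    intro v
    have : Prod.mk v ⁻¹' {p : E2 × E2 | dist p.1 p.2 ≤ h'} = Metric.closedBall v h' := by
      ext y; simp [Metric.mem_closedBall, dist_comm]
    rw [this, unifDisk_apply R hR.le measurableSet_closedBall]
    calc (ENNReal.ofReal (π * R ^ 2))⁻¹ * volume (Metric.closedBall v h' ∩ Metric.closedBall 0 R)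
        ≤ (ENNReal.ofReal (π * R ^ 2))⁻¹ * ENNReal.ofReal (π * h' ^ 2) :=
          mul_le_mul_right (le_of_le_of_eq (measure_mono Set.inter_subset_left)
            (volE2_closedBall _ _ hh)) _
      _ = ENNReal.ofReal (π * h' ^ 2 / (π * R ^ 2)) :=
          ofReal_inv_mul _ _ (by positivity) (by positivity)
      _ = ENNReal.ofReal (h' ^ 2 / R ^ 2) := by
          congr 1
          rw [div_eq_div_iff (by positivity) (by positivity)]
          ring
  calc ∫⁻ v, unifDisk R (Prod.mk v ⁻¹' {p : E2 × E2 | dist p.1 p.2 ≤ h'}) ∂(unifDisk R)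
      ≤ ∫⁻ _, ENNReal.ofReal (h' ^ 2 / R ^ 2) ∂(unifDisk R) := lintegral_mono hslice
    _ = ENNReal.ofReal (h' ^ 2 / R ^ 2) := by simp


set_option maxHeartbeats 1000000 in
/-- Lemma 4 of the paper.  Fix `α > 2`, `ρ_p > 0`, `c > 0`, `h > 0`,
`r_T ≥ 0`.  For each `N > 0` let `R_N = √(cN/(π ρ_p))` and `X₁, X₂` i.i.d. uniform on the
closed disk of radius `R_N`; `𝒜_N` is the event that both lie in the annulus
`{x : r_T + 2h ≤ |x| ≤ R_N − h}` and `|X₁ − X₂| > 2h`.  Then for every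
`x > (π ρ_p/c)^(α/2)`,
`Pr(N^(α/2)|X₁|^{-α} > x ∧ N^(α/2)|X₂|^{-α} > x | 𝒜_N) → (π ρ_p/c)²·x^{-4/α}`. -/
theorem stmt17 (α ρp c h rT : ℝ) (hα : 2 < α) (hρp : 0 < ρp) (hc : 0 < c)
    (hh : 0 < h) (hrT : 0 ≤ rT)
    (R : ℝ → ℝ) (hRdef : ∀ N : ℝ, R N = Real.sqrt (c * N / (π * ρp)))
    (Ω : ℝ → Type) [∀ N, MeasurableSpace (Ω N)]
    (P : (N : ℝ) → Measure (Ω N)) (hprob : ∀ N, IsProbabilityMeasure (P N))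
    (X Y : (N : ℝ) → Ω N → EuclideanSpace ℝ (Fin 2))
    (hmeasX : ∀ N, Measurable (X N)) (hmeasY : ∀ N, Measurable (Y N))
    (hindep : ∀ N : ℝ, 0 < N → IndepFun (X N) (Y N) (P N))
    (hlawX : ∀ N : ℝ, 0 < N → (P N).map (X N) = unifDisk (R N))
    (hlawY : ∀ N : ℝ, 0 < N → (P N).map (Y N) = unifDisk (R N))
    (x : ℝ) (hx : (π * ρp / c) ^ (α / 2) < x) :
    Tendsto
      (fun N : ℝ =>
        (((P N)[|{ω | (rT + 2 * h ≤ ‖X N ω‖ ∧ ‖X N ω‖ ≤ R N - h) ∧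
            (rT + 2 * h ≤ ‖Y N ω‖ ∧ ‖Y N ω‖ ≤ R N - h) ∧
            2 * h < dist (X N ω) (Y N ω)}])
          {ω | x < N ^ (α / 2) * ‖X N ω‖ ^ (-α) ∧
            x < N ^ (α / 2) * ‖Y N ω‖ ^ (-α)}).toReal)
      atTop (nhds ((π * ρp / c) ^ 2 * x ^ (-4 / α))) := by
  have hα0 : (0:ℝ) < α := by linarith
  have hπρc : 0 < π * ρp / c := by positivity
  have hx0 : 0 < x := lt_trans (Real.rpow_pos_of_pos hπρc _) hx
  set q : ℝ := π * ρp / c * x ^ (-(2 / α)) with hqdef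
  have hxneg : 0 < x ^ (-(2 / α)) := Real.rpow_pos_of_pos hx0 _
  have hq0 : 0 < q := by positivity
  have hqL : (π * ρp / c) ^ 2 * x ^ (-4 / α) = q ^ 2 := by
    rw [hqdef, mul_pow]
    congr 1
    rw [← Real.rpow_natCast (x ^ (-(2 / α))) 2, ← Real.rpow_mul hx0.le]
    congr 1
    ring
  rw [hqL]
  have hx2α : π * ρp / c < x ^ (2 / α) := by
    have h1 : ((π * ρp / c) ^ (α / 2)) ^ (2 / α) < x ^ (2 / α) :=
      Real.rpow_lt_rpow (Real.rpow_nonneg hπρc.le _) hx (by positivity)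
    rwa [← Real.rpow_mul hπρc.le, show α / 2 * (2 / α) = 1 by field_simp,
      Real.rpow_one] at h1
  have hRtop : Tendsto R atTop atTop := by
    have h1 : Tendsto (fun N : ℝ => c * N / (π * ρp)) atTop atTop :=
      (tendsto_id.const_mul_atTop hc).atTop_div_const (by positivity)
    have hsq : Tendsto Real.sqrt atTop atTop := by
      refine tendsto_atTop_atTop.mpr fun b => ⟨b^2, fun a ha => ?_⟩
      calc b ≤ |b| := le_abs_self b
        _ = Real.sqrt (b^2) := (Real.sqrt_sq_eq_abs b).symm
        _ ≤ Real.sqrt a := Real.sqrt_le_sqrt ha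
    exact (hsq.comp h1).congr fun N => (hRdef N).symm
  set δ : ℝ → ℝ := fun N => (2 * (rT + 2*h)^2 + 4*h^2) / (R N)^2 + 4*h / R N with hδdef
  have hδ0 : Tendsto δ atTop (nhds 0) := by
    have h1 : Tendsto (fun N => (2 * (rT + 2*h)^2 + 4*h^2) / (R N)^2) atTop (nhds 0) :=
      tendsto_const_nhds.div_atTop ((tendsto_pow_atTop two_ne_zero).comp hRtop)
    have h2 : Tendsto (fun N => 4*h / R N) atTop (nhds 0) :=
      tendsto_const_nhds.div_atTop hRtop
    simpa using h1.add h2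
  have key : ∀ᶠ N : ℝ in atTop,
      q ^ 2 - δ N ≤ (((P N)[|{ω | (rT + 2 * h ≤ ‖X N ω‖ ∧ ‖X N ω‖ ≤ R N - h) ∧
            (rT + 2 * h ≤ ‖Y N ω‖ ∧ ‖Y N ω‖ ≤ R N - h) ∧
            2 * h < dist (X N ω) (Y N ω)}])
          {ω | x < N ^ (α / 2) * ‖X N ω‖ ^ (-α) ∧
            x < N ^ (α / 2) * ‖Y N ω‖ ^ (-α)}).toReal ∧
      (((P N)[|{ω | (rT + 2 * h ≤ ‖X N ω‖ ∧ ‖X N ω‖ ≤ R N - h) ∧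
            (rT + 2 * h ≤ ‖Y N ω‖ ∧ ‖Y N ω‖ ≤ R N - h) ∧
            2 * h < dist (X N ω) (Y N ω)}])
          {ω | x < N ^ (α / 2) * ‖X N ω‖ ^ (-α) ∧
            x < N ^ (α / 2) * ‖Y N ω‖ ^ (-α)}).toReal ≤ q ^ 2 / (1 - δ N) := by
    filter_upwards [eventually_gt_atTop 0, hRtop.eventually_ge_atTop (rT + 3*h),
      hδ0.eventually_lt_const one_pos] with N hN0 hRN hδ1
    haveI := hprob N
    have hR0 : 0 < R N := by linarith
    have hR2 : (R N)^2 = c * N / (π * ρp) := by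
      rw [hRdef]; exact Real.sq_sqrt (by positivity)
    have hδnn : 0 ≤ δ N := by
      rw [hδdef]; positivity
    -- the scaled radius
    set rr : ℝ := (N ^ (α/2) / x) ^ α⁻¹ with hrrdef
    have hNa : 0 < N ^ (α/2) := Real.rpow_pos_of_pos hN0 _
    have hrr0 : 0 < rr := Real.rpow_pos_of_pos (by positivity) _
    have hx2pos : 0 < x ^ (2/α) := Real.rpow_pos_of_pos hx0 _
    have hrr2 : rr^2 = N / x ^ (2/α) := by
      rw [hrrdef, ← Real.rpow_natCast ((N ^ (α/2) / x) ^ α⁻¹) 2,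
        ← Real.rpow_mul (by positivity), Real.div_rpow hNa.le hx0.le,
        ← Real.rpow_mul hN0.le]
      norm_num
      rw [show α / 2 * (α⁻¹ * 2) = 1 by field_simp, Real.rpow_one,
        show α⁻¹ * 2 = 2 / α by ring]
    have hrrR : rr < R N := by
      have h2 : rr^2 < (R N)^2 := by
        rw [hrr2, hR2, div_lt_div_iff₀ hx2pos (by positivity)]
        rw [div_lt_iff₀ hc] at hx2α
        nlinarith
      nlinarith
    have hqval : π * rr^2 / (π * (R N)^2) = q := by
      rw [hrr2, hR2, hqdef, Real.rpow_neg hx0.le]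
      field_simp
    -- measurability of basic sets
    have hAnnMeas : MeasurableSet {v : E2 | rT + 2*h ≤ ‖v‖ ∧ ‖v‖ ≤ R N - h} :=
      (measurableSet_le measurable_const measurable_norm).inter
        (measurableSet_le measurable_norm measurable_const)
    have hSeq : {v : E2 | x < N ^ (α/2) * ‖v‖ ^ (-α)} = Metric.ball 0 rr \ {0} := by
      ext v
      simp only [Set.mem_setOf_eq, Set.mem_diff, Metric.mem_ball, dist_zero_right,
        Set.mem_singleton_iff]
      by_cases hv : v = 0
      · subst hv
        simp only [norm_zero]
        rw [Real.zero_rpow (by linarith : -α ≠ 0)]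
        constructor
        · intro hcon; rw [mul_zero] at hcon; linarith
        · rintro ⟨-, hfalse⟩; simp at hfalse
      · have hvn : 0 < ‖v‖ := norm_pos_iff.mpr hv
        have hpos : 0 < ‖v‖ ^ α := Real.rpow_pos_of_pos hvn _
        rw [Real.rpow_neg (norm_nonneg v)]
        constructor
        · intro hlt
          have h1 : x * ‖v‖ ^ α < N ^ (α/2) := by
            have := mul_lt_mul_of_pos_right hlt hpos
            rwa [mul_assoc, inv_mul_cancel₀ hpos.ne', mul_one] at this
          have h2 : ‖v‖ ^ α < N ^ (α/2) / x := by
            rw [lt_div_iff₀ hx0]; linarith [h1]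
          exact ⟨(Real.lt_rpow_inv_iff_of_pos (norm_nonneg v) (by positivity) hα0).mpr h2, hv⟩
        · rintro ⟨hlt, -⟩
          have h2 : ‖v‖ ^ α < N ^ (α/2) / x :=
            (Real.lt_rpow_inv_iff_of_pos (norm_nonneg v) (by positivity) hα0).mp hlt
          have h1 : x * ‖v‖ ^ α < N ^ (α/2) := by
            rw [lt_div_iff₀ hx0] at h2; linarith [h2]
          have := mul_lt_mul_of_pos_right h1 (inv_pos.mpr hpos)
          rwa [mul_assoc, mul_inv_cancel₀ hpos.ne', mul_one] at this
    have hSmeas : MeasurableSet {v : E2 | x < N ^ (α/2) * ‖v‖ ^ (-α)} := by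
      rw [hSeq]; exact measurableSet_ball.diff (measurableSet_singleton 0)
    -- the events
    set A : Set (Ω N) := {ω | (rT + 2 * h ≤ ‖X N ω‖ ∧ ‖X N ω‖ ≤ R N - h) ∧
        (rT + 2 * h ≤ ‖Y N ω‖ ∧ ‖Y N ω‖ ≤ R N - h) ∧
        2 * h < dist (X N ω) (Y N ω)} with hAdef
    set Bs : Set (Ω N) := {ω | x < N ^ (α / 2) * ‖X N ω‖ ^ (-α) ∧
        x < N ^ (α / 2) * ‖Y N ω‖ ^ (-α)} with hBdef
    have hDmeas : MeasurableSet {p : E2 × E2 | dist p.1 p.2 ≤ 2*h} :=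
      measurableSet_le (measurable_fst.dist measurable_snd) measurable_const
    have hAmeas : MeasurableSet A := by
      rw [hAdef]
      exact ((hmeasX N) hAnnMeas).inter (((hmeasY N) hAnnMeas).inter
        (((hmeasX N).prodMk (hmeasY N))
          (measurableSet_lt measurable_const (measurable_fst.dist measurable_snd))))
    -- the bound on the complement of A
    have hAc : P N Aᶜ ≤ ENNReal.ofReal (δ N) := by
      have hsub : Aᶜ ⊆ (X N ⁻¹' {v : E2 | rT + 2*h ≤ ‖v‖ ∧ ‖v‖ ≤ R N - h}ᶜ) ∪
          ((Y N ⁻¹' {v : E2 | rT + 2*h ≤ ‖v‖ ∧ ‖v‖ ≤ R N - h}ᶜ) ∪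
           ((fun ω => (X N ω, Y N ω)) ⁻¹' {p : E2 × E2 | dist p.1 p.2 ≤ 2*h})) := by
        intro ω hω
        simp only [hAdef, Set.mem_compl_iff, Set.mem_setOf_eq, not_and, not_lt] at hω
        simp only [Set.mem_union, Set.mem_preimage, Set.mem_compl_iff, Set.mem_setOf_eq]
        tauto
      have h1 : P N (X N ⁻¹' {v : E2 | rT + 2*h ≤ ‖v‖ ∧ ‖v‖ ≤ R N - h}ᶜ)
          ≤ ENNReal.ofReal (((rT+2*h)^2 + 2*(R N)*h) / (R N)^2) := by
        rw [← Measure.map_apply (hmeasX N) hAnnMeas.compl, hlawX N hN0]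
        exact unifDisk_annulus_compl (R N) (rT+2*h) h hR0 (by positivity) hh.le (by linarith)
      have h2 : P N (Y N ⁻¹' {v : E2 | rT + 2*h ≤ ‖v‖ ∧ ‖v‖ ≤ R N - h}ᶜ)
          ≤ ENNReal.ofReal (((rT+2*h)^2 + 2*(R N)*h) / (R N)^2) := by
        rw [← Measure.map_apply (hmeasY N) hAnnMeas.compl, hlawY N hN0]
        exact unifDisk_annulus_compl (R N) (rT+2*h) h hR0 (by positivity) hh.le (by linarith)
      have hmap := (indepFun_iff_map_prod_eq_prod_map_map (hmeasX N).aemeasurable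
          (hmeasY N).aemeasurable).mp (hindep N hN0)
      rw [hlawX N hN0, hlawY N hN0] at hmap
      have h3 : P N ((fun ω => (X N ω, Y N ω)) ⁻¹' {p : E2 × E2 | dist p.1 p.2 ≤ 2*h})
          ≤ ENNReal.ofReal ((2*h)^2 / (R N)^2) := by
        rw [← Measure.map_apply ((hmeasX N).prodMk (hmeasY N)) hDmeas, hmap]
        exact prod_dist_le (R N) (2*h) hR0 (by positivity)
      calc P N Aᶜ
          ≤ P N (X N ⁻¹' {v : E2 | rT + 2*h ≤ ‖v‖ ∧ ‖v‖ ≤ R N - h}ᶜ) +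
            (P N (Y N ⁻¹' {v : E2 | rT + 2*h ≤ ‖v‖ ∧ ‖v‖ ≤ R N - h}ᶜ) +
             P N ((fun ω => (X N ω, Y N ω)) ⁻¹' {p : E2 × E2 | dist p.1 p.2 ≤ 2*h})) :=
            le_trans (measure_mono hsub) ((measure_union_le _ _).trans
              (add_le_add le_rfl (measure_union_le _ _)))
        _ ≤ ENNReal.ofReal (((rT+2*h)^2 + 2*(R N)*h) / (R N)^2) +
            (ENNReal.ofReal (((rT+2*h)^2 + 2*(R N)*h) / (R N)^2) +
             ENNReal.ofReal ((2*h)^2 / (R N)^2)) := add_le_add h1 (add_le_add h2 h3)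
        _ = ENNReal.ofReal (δ N) := by
            rw [← ENNReal.ofReal_add (by positivity) (by positivity),
              ← ENNReal.ofReal_add (by positivity) (by positivity)]
            congr 1
            rw [hδdef]
            field_simp
            ring
    -- the value of P B
    have hBval : P N Bs = ENNReal.ofReal q * ENNReal.ofReal q := by
      have hBeq : Bs = (X N ⁻¹' {v : E2 | x < N ^ (α/2) * ‖v‖ ^ (-α)}) ∩
          (Y N ⁻¹' {v : E2 | x < N ^ (α/2) * ‖v‖ ^ (-α)}) := rfl
      rw [hBeq, (hindep N hN0).measure_inter_preimage_eq_mul _ _ hSmeas hSmeas,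
        ← Measure.map_apply (hmeasX N) hSmeas, ← Measure.map_apply (hmeasY N) hSmeas,
        hlawX N hN0, hlawY N hN0, hSeq,
        unifDisk_ball_diff (R N) rr hrr0.le hR0 hrrR.le, hqval]
    -- real-valued bounds
    have hsum : (P N A).toReal + (P N Aᶜ).toReal = 1 := by
      rw [← ENNReal.toReal_add (measure_ne_top _ _) (measure_ne_top _ _),
        measure_add_measure_compl hAmeas, measure_univ, ENNReal.toReal_one]
    have hAc_real : (P N Aᶜ).toReal ≤ δ N := ENNReal.toReal_le_of_le_ofReal hδnn hAc
    have hAc_nn : 0 ≤ (P N Aᶜ).toReal := ENNReal.toReal_nonneg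
    have haN_ge : 1 - δ N ≤ (P N A).toReal := by linarith
    have haN_le : (P N A).toReal ≤ 1 := by linarith
    have haN_pos : 0 < (P N A).toReal := by linarith
    have hBreal : (P N Bs).toReal = q^2 := by
      rw [hBval, ← ENNReal.ofReal_mul hq0.le, ENNReal.toReal_ofReal (by positivity)]
      ring
    have hb_nn : 0 ≤ (P N (A ∩ Bs)).toReal := ENNReal.toReal_nonneg
    have hb_le : (P N (A ∩ Bs)).toReal ≤ q^2 := by
      rw [← hBreal]
      exact ENNReal.toReal_mono (measure_ne_top _ _) (measure_mono Set.inter_subset_right)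
    have hb_ge : q^2 - δ N ≤ (P N (A ∩ Bs)).toReal := by
      have hBsub : Bs ⊆ (A ∩ Bs) ∪ Aᶜ := by
        intro ω hω
        by_cases hA' : ω ∈ A
        · exact Or.inl ⟨hA', hω⟩
        · exact Or.inr hA'
      have h1 : P N Bs ≤ P N (A ∩ Bs) + P N Aᶜ :=
        (measure_mono hBsub).trans (measure_union_le _ _)
      have h2 : (P N Bs).toReal ≤ (P N (A ∩ Bs)).toReal + (P N Aᶜ).toReal := by
        rw [← ENNReal.toReal_add (measure_ne_top _ _) (measure_ne_top _ _)]
        exact ENNReal.toReal_mono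
          (ENNReal.add_ne_top.mpr ⟨measure_ne_top _ _, measure_ne_top _ _⟩) h1
      rw [hBreal] at h2
      linarith
    have hF : (((P N)[|A]) Bs).toReal = (P N (A ∩ Bs)).toReal / (P N A).toReal := by
      rw [ProbabilityTheory.cond_apply hAmeas (P N) Bs, ENNReal.toReal_mul,
        ENNReal.toReal_inv]
      rw [inv_mul_eq_div]
    rw [hF]
    constructor
    · calc q^2 - δ N ≤ (P N (A ∩ Bs)).toReal := hb_ge
        _ ≤ (P N (A ∩ Bs)).toReal / (P N A).toReal := by
            rw [le_div_iff₀ haN_pos]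
            exact mul_le_of_le_one_right hb_nn haN_le
    · rw [div_le_div_iff₀ haN_pos (by linarith : (0:ℝ) < 1 - δ N)]
      calc (P N (A ∩ Bs)).toReal * (1 - δ N)
          ≤ q^2 * (1 - δ N) := mul_le_mul_of_nonneg_right hb_le (by linarith)
        _ ≤ q^2 * (P N A).toReal := mul_le_mul_of_nonneg_left haN_ge (by positivity)
  refine tendsto_of_tendsto_of_tendsto_of_le_of_le'
    (g := fun N => q^2 - δ N) (h := fun N => q^2 / (1 - δ N)) ?_ ?_ ?_ ?_
  · simpa using tendsto_const_nhds.sub hδ0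
  · have h1 : Tendsto (fun N => 1 - δ N) atTop (nhds 1) := by
      simpa using tendsto_const_nhds.sub hδ0
    have h2 : Tendsto (fun N => q^2 / (1 - δ N)) atTop (nhds (q^2 / 1)) :=
      tendsto_const_nhds.div h1 one_ne_zero
    simpa using h2
  · exact key.mono fun N hN => hN.1
  · exact key.mono fun N hN => hN.2
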